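/- Let G be a directed acyclic graph, let P = [a_1, …, a_k] be a chain of the transitive closure G* (so a_{i+1} is reachable from a_i in G for each i), let E_P = {(a_i, a_{i+1}) : 1 ≤ i < k}, and let H be a set of edges (a_i, a_j) with i < j such that dist_{E_P ∪ H}(a_i, a_j) ≤ 2 for all i < j. Then for every pair of vertices u, v, any directed u-v path having the minimum number of edges among all u-v paths in G ∪ E_P ∪ H contains at most 3 vertices from {a_1, …, a_k}. -/

import Mathlib

namespace Paper

variable {V : Type*}

/-- `IsWalk E u v l` : `l` is the list of vertices visited after `u` on a
directed walk from `u` to `v` in the digraph with edge relation `E`.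
The number of edges of the walk is `l.length`. -/
def IsWalk (E : V → V → Prop) : V → V → List V → Prop
  | u, v, [] => u = v
  | u, v, x :: xs => E u x ∧ IsWalk E x v xs

/-- `v` is reachable from `u` by a directed walk (possibly trivial). -/
def Reach (E : V → V → Prop) (u v : V) : Prop := ∃ l, IsWalk E u v l

/-- The transitive closure `G*`: pairs `(u,v)` with `u ≠ v` and `v` reachable from `u`. -/
def TC (E : V → V → Prop) (u v : V) : Prop := u ≠ v ∧ Reach E u v

/-- `dist E u v` : minimum number of edges on a directed walk from `u` to `v`. -/
noncomputable def dist (E : V → V → Prop) (u v : V) : ℕ :=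
  sInf {k | ∃ l, IsWalk E u v l ∧ l.length = k}

/-- The digraph `G ∪ H` obtained by adding the edge set `H` to `E`. -/
def addE (E : V → V → Prop) (H : Finset (V × V)) : V → V → Prop :=
  fun a b => E a b ∨ (a, b) ∈ H


/-- A digraph is acyclic (a DAG) if it has no nonempty closed walk. -/
def Acyclic (E : V → V → Prop) : Prop :=
  ∀ (v : V) (l : List V), IsWalk E v v l → l = []

lemma isWalk_append {E : V → V → Prop} :
    ∀ {l₁ : List V} {u v w : V} {l₂ : List V},
      IsWalk E u v l₁ → IsWalk E v w l₂ → IsWalk E u w (l₁ ++ l₂)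
  | [], u, v, w, l₂, h₁, h₂ => by cases h₁; simpa using h₂
  | x :: xs, u, v, w, l₂, h₁, h₂ => ⟨h₁.1, isWalk_append h₁.2 h₂⟩

lemma reach_trans {E : V → V → Prop} {u v w : V}
    (h₁ : Reach E u v) (h₂ : Reach E v w) : Reach E u w := by
  obtain ⟨l₁, h₁⟩ := h₁; obtain ⟨l₂, h₂⟩ := h₂
  exact ⟨l₁ ++ l₂, isWalk_append h₁ h₂⟩

lemma isWalk_mono {E F : V → V → Prop} (hEF : ∀ a b, E a b → F a b) :
    ∀ {l : List V} {u v : V}, IsWalk E u v l → IsWalk F u v l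
  | [], u, v, h => h
  | x :: xs, u, v, h => ⟨hEF _ _ h.1, isWalk_mono hEF h.2⟩

lemma reach_antisymm {E : V → V → Prop} (hacy : Acyclic E) {x y : V}
    (h₁ : Reach E x y) (h₂ : Reach E y x) : x = y := by
  obtain ⟨l, hl⟩ := h₁; obtain ⟨m, hm⟩ := h₂
  have h := hacy x (l ++ m) (isWalk_append hl hm)
  have : l = [] := by
    cases l with
    | nil => rfl
    | cons a t => simp at h
  subst this
  exact hl

lemma isWalk_take_drop {E : V → V → Prop} :
    ∀ (p : List V) (u v x : V), IsWalk E u v p →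
      ∀ (i : ℕ) (hi : i < (u :: p).length), (u :: p)[i] = x →
        IsWalk E u x (p.take i) ∧ IsWalk E x v (p.drop i)
  | [], u, v, x, h, i, hi, hx => by
      have : i = 0 := by simp at hi; omega
      subst this
      simp at hx
      subst hx
      exact ⟨rfl, h⟩
  | w :: xs, u, v, x, h, 0, hi, hx => by
      simp at hx
      subst hx
      exact ⟨rfl, h⟩
  | w :: xs, u, v, x, h, (j+1), hi, hx => by
      have hi' : j < (w :: xs).length := by simpa using hi
      have hx' : (w :: xs)[j] = x := by simpa using hx
      obtain ⟨h₁, h₂⟩ := isWalk_take_drop xs w v x h.2 j hi' hx'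
      exact ⟨⟨h.1, h₁⟩, h₂⟩

/-- reach between two positions on a walk -/
lemma reach_positions {E : V → V → Prop} {p : List V} {u v x y : V}
    (h : IsWalk E u v p) {i j : ℕ} (hij : i ≤ j) (hj : j < (u :: p).length)
    (hx : (u :: p)[i]'(lt_of_le_of_lt (by omega) hj) = x) (hy : (u :: p)[j] = y) :
    Reach E x y := by
  obtain ⟨h₁, -⟩ := isWalk_take_drop p u v y h j hj hy
  have hjlen : j ≤ p.length := by simpa using Nat.lt_succ_iff.mp hj
  have hilen : i < (u :: p.take j).length := by
    simp [List.length_take]; omega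
  have hx' : (u :: p.take j)[i] = x := by
    rcases i with - | i'
    · simpa using hx
    · have : i' < (p.take j).length := by simp [List.length_take]; omega
      have ht := List.getElem_take (xs := p) (i := i') (j := j) (h := this)
      simp only [List.getElem_cons_succ] at hx ⊢
      rw [ht]
      simpa using hx
  obtain ⟨-, h₂⟩ := isWalk_take_drop (p.take j) u y x h₁ i hilen hx'
  exact ⟨_, h₂⟩

/-- Let `G` be a DAG, let `P = [a_1, …, a_k]` be a chain of the
transitive closure `G*`, let `E_P` be its set of consecutive edges, and let `H` be a
set of edges `(a_i, a_j)` with `i < j` such that `dist_{E_P ∪ H}(a_i, a_j) ≤ 2` for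
all `i < j`. Then for all vertices `u, v`, any directed `u`-`v` path with the minimum
number of edges among all `u`-`v` paths in `G ∪ E_P ∪ H` contains at most `3` vertices
from `{a_1, …, a_k}`. -/
theorem min_hop_path_meets_shortcut_chain (n k : ℕ) (E : Fin n → Fin n → Prop)
    (hacy : Acyclic E)
    (a : Fin k → Fin n) (hinj : Function.Injective a)
    (hchain : ∀ (i : Fin k) (h : (i : ℕ) + 1 < k), TC E (a i) (a ⟨(i : ℕ) + 1, h⟩))
    (EP : Fin n → Fin n → Prop)
    (hEP : EP = fun x y =>
      ∃ (i : Fin k) (h : (i : ℕ) + 1 < k), x = a i ∧ y = a ⟨(i : ℕ) + 1, h⟩)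
    (H : Finset (Fin n × Fin n))
    (hH : ∀ e ∈ H, ∃ i j : Fin k, i < j ∧ e = (a i, a j))
    (hH2 : ∀ i j : Fin k, i < j →
      dist (fun x y => EP x y ∨ (x, y) ∈ H) (a i) (a j) ≤ 2)
    (E' : Fin n → Fin n → Prop)
    (hE' : E' = fun x y => E x y ∨ EP x y ∨ (x, y) ∈ H)
    (u v : Fin n) (p : List (Fin n))
    (hwalk : IsWalk E' u v p)
    (hmin : ∀ q : List (Fin n), IsWalk E' u v q → p.length ≤ q.length) :
    ((u :: p).toFinset.filter (fun x => ∃ i : Fin k, a i = x)).card ≤ 3 := by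
  by_contra hcard
  push_neg at hcard
  -- chain reachability in E
  have chainE : ∀ (d : ℕ) (i j : Fin k), (j : ℕ) = (i : ℕ) + d → Reach E (a i) (a j) := by
    intro d
    induction d with
    | zero =>
        intro i j hij
        have : i = j := Fin.ext (by omega)
        subst this
        exact ⟨[], rfl⟩
    | succ d ih =>
        intro i j hij
        have hlt : (i : ℕ) + d < k := by omega
        set j' : Fin k := ⟨(i : ℕ) + d, hlt⟩ with hj'
        have h₁ : Reach E (a i) (a j') := ih i j' rfl
        have hlt2 : (j' : ℕ) + 1 < k := by simpa [hj'] using (by omega : (i:ℕ) + d + 1 < k)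
        have h₂ := (hchain j' hlt2).2
        have : (⟨(j' : ℕ) + 1, hlt2⟩ : Fin k) = j := Fin.ext (by simp [hj']; omega)
        rw [this] at h₂
        exact reach_trans h₁ h₂
  have chainE' : ∀ i j : Fin k, i ≤ j → Reach E (a i) (a j) := by
    intro i j hij
    exact chainE ((j : ℕ) - i) i j (by omega)
  -- every E' edge has E-reachable endpoints
  have edgeReach : ∀ x y : Fin n, E' x y → Reach E x y := by
    intro x y hxy
    rw [hE'] at hxy
    rcases hxy with h | h | h
    · exact ⟨[y], h, rfl⟩
    · rw [hEP] at h
      obtain ⟨i, hlt, rfl, rfl⟩ := h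
      exact (hchain i hlt).2
    · obtain ⟨i, j, hij, he⟩ := hH _ h
      obtain ⟨rfl, rfl⟩ := Prod.mk.inj he
      exact chainE' i j hij.le
  have walkReach : ∀ (l : List (Fin n)) (x y : Fin n), IsWalk E' x y l → Reach E x y := by
    intro l
    induction l with
    | nil => intro x y h; cases h; exact ⟨[], rfl⟩
    | cons w t ih => intro x y h; exact reach_trans (edgeReach _ _ h.1) (ih _ _ h.2)
  set L := u :: p with hL
  -- chain vertices on the path appear in increasing index order
  have posmono : ∀ i j : Fin k, a i ∈ L → a j ∈ L → i < j →
      L.idxOf (a i) < L.idxOf (a j) := by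
    intro i j hiL hjL hij
    by_contra hle
    push_neg at hle
    have hjlt : L.idxOf (a j) < L.length := List.idxOf_lt_length_iff.mpr hjL
    have hilt : L.idxOf (a i) < L.length := List.idxOf_lt_length_iff.mpr hiL
    have hreach : Reach E' (a j) (a i) :=
      reach_positions hwalk hle hilt (List.getElem_idxOf hjlt) (List.getElem_idxOf hilt)
    obtain ⟨l, hl⟩ := hreach
    have h₁ : Reach E (a j) (a i) := walkReach l _ _ hl
    have h₂ : Reach E (a i) (a j) := chainE' i j hij.le
    have := reach_antisymm hacy h₁ h₂
    exact hij.ne' (hinj this)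
  -- the set of chain indices on the path
  set T : Finset (Fin k) := Finset.univ.filter (fun i => a i ∈ L) with hT
  have hST : (L.toFinset.filter (fun x => ∃ i : Fin k, a i = x)) = T.image a := by
    ext x
    simp only [Finset.mem_filter, List.mem_toFinset, Finset.mem_image, hT,
      Finset.mem_filter, Finset.mem_univ, true_and]
    constructor
    · rintro ⟨hx, i, rfl⟩; exact ⟨i, hx, rfl⟩
    · rintro ⟨i, hi, rfl⟩; exact ⟨hi, i, rfl⟩
  have hTcard : 3 < T.card := by
    rw [hST, Finset.card_image_of_injective _ hinj] at hcard
    exact hcard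
  have hTne : T.Nonempty := Finset.card_pos.mp (by omega)
  set m := T.min' hTne with hm
  set M := T.max' hTne with hM
  have hmM : m < M := T.min'_lt_max'_of_card (by omega)
  have hmem : ∀ i, i ∈ T → a i ∈ L := by
    intro i hi; rw [hT] at hi; exact (Finset.mem_filter.mp hi).2
  set φ : Fin k → ℕ := fun i => L.idxOf (a i) with hφ
  -- image of T under φ has card = T.card and sits inside Icc (φ m) (φ M)
  have hmono : ∀ i j, i ∈ T → j ∈ T → i ≤ j → φ i ≤ φ j := by
    intro i j hi hj hij
    rcases eq_or_lt_of_le hij with rfl | h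
    · exact le_rfl
    · exact (posmono i j (hmem i hi) (hmem j hj) h).le
  have hphiinj : Set.InjOn φ T := by
    intro i hi j hj hij
    by_contra hne
    rcases lt_or_gt_of_ne hne with h | h
    · exact absurd hij (posmono i j (hmem i hi) (hmem j hj) h).ne
    · exact absurd hij.symm (posmono j i (hmem j hj) (hmem i hi) h).ne
  have hsub : T.image φ ⊆ Finset.Icc (φ m) (φ M) := by
    intro x hx
    obtain ⟨i, hi, rfl⟩ := Finset.mem_image.mp hx
    exact Finset.mem_Icc.mpr ⟨hmono m i (T.min'_mem hTne) hi (T.min'_le i hi),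
      hmono i M hi (T.max'_mem hTne) (T.le_max' i hi)⟩
  have hgap : φ m + 3 ≤ φ M := by
    have h1 : T.card = (T.image φ).card := (Finset.card_image_of_injOn hphiinj).symm
    have h2 : (T.image φ).card ≤ (Finset.Icc (φ m) (φ M)).card := Finset.card_le_card hsub
    rw [Nat.card_Icc] at h2
    omega
  -- get a short walk from a m to a M in EP ∪ H
  have chainEP : ∀ (d : ℕ) (i j : Fin k), (j : ℕ) = (i : ℕ) + d →
      Reach (fun x y => EP x y ∨ (x, y) ∈ H) (a i) (a j) := by
    intro d
    induction d with
    | zero =>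
        intro i j hij
        have : i = j := Fin.ext (by omega)
        subst this
        exact ⟨[], rfl⟩
    | succ d ih =>
        intro i j hij
        have hlt : (i : ℕ) + d < k := by omega
        set j' : Fin k := ⟨(i : ℕ) + d, hlt⟩ with hj'
        have h₁ := ih i j' rfl
        have hlt2 : (j' : ℕ) + 1 < k := by simpa [hj'] using (by omega : (i:ℕ) + d + 1 < k)
        have hedge : EP (a j') (a ⟨(j' : ℕ) + 1, hlt2⟩) := by
          rw [hEP]; exact ⟨j', hlt2, rfl, rfl⟩
        have : (⟨(j' : ℕ) + 1, hlt2⟩ : Fin k) = j := Fin.ext (by simp [hj']; omega)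
        rw [this] at hedge
        exact reach_trans h₁ ⟨[a j], Or.inl hedge, rfl⟩
  have hne : {c | ∃ l, IsWalk (fun x y => EP x y ∨ (x, y) ∈ H) (a m) (a M) l ∧
      l.length = c}.Nonempty := by
    obtain ⟨l, hl⟩ := chainEP ((M : ℕ) - m) m M (by omega)
    exact ⟨l.length, l, hl, rfl⟩
  have hdist := Nat.sInf_mem hne
  obtain ⟨w, hw, hwlen⟩ := hdist
  have hwlen2 : w.length ≤ 2 := hwlen.trans_le (hH2 m M hmM)
  -- splice: replacement walk
  have hmlt : φ m < L.length := List.idxOf_lt_length_iff.mpr (hmem m (T.min'_mem hTne))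
  have hMlt : φ M < L.length := List.idxOf_lt_length_iff.mpr (hmem M (T.max'_mem hTne))
  obtain ⟨hwalk₁, -⟩ :=
    isWalk_take_drop p u v (a m) hwalk (φ m) hmlt (List.getElem_idxOf hmlt)
  obtain ⟨-, hwalk₂⟩ :=
    isWalk_take_drop p u v (a M) hwalk (φ M) hMlt (List.getElem_idxOf hMlt)
  have hwE' : IsWalk E' (a m) (a M) w := by
    refine isWalk_mono ?_ hw
    intro x y hxy
    rw [hE']
    rcases hxy with h | h
    · exact Or.inr (Or.inl h)
    · exact Or.inr (Or.inr h)
  have hq : IsWalk E' u v (p.take (φ m) ++ (w ++ p.drop (φ M))) :=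
    isWalk_append hwalk₁ (isWalk_append hwE' hwalk₂)
  have := hmin _ hq
  simp only [List.length_append, List.length_take, List.length_drop] at this
  have hmlen : φ m ≤ p.length := by simpa [hL] using Nat.lt_succ_iff.mp hmlt
  have hMlen : φ M ≤ p.length := by simpa [hL] using Nat.lt_succ_iff.mp hMlt
  omega

end Paper
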